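/- Let H be a real normed space of dimension at least two, and fix integers n > k ≥ 2. Then the parallelogram law ‖x + y‖² + ‖x − y‖² = 2‖x‖² + 2‖y‖² holds for all x, y ∈ H (i.e. the norm of H is induced by an inner product) if and only if the identity C(n−2, k−2) · ‖x_1 + ⋯ + x_n‖² = ∑_{A ⊆ {1,…,n}, |A| = k} ‖x_A‖² − C(n−2, k−1) · ∑_{i=1}^{n} ‖x_i‖² holds for all x_1, …, x_n ∈ H, where C(m, j) denotes the binomial coefficient m choose j. -/

import Mathlib

open Finset

lemma filterCard (n k : ℕ) (T S : Finset (Fin n)) (hST : S ⊆ T) (hSk : S.card ≤ k) :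
    ((powersetCard k (univ : Finset (Fin n))).filter (fun A => A ∩ T = S)).card
      = (n - T.card).choose (k - S.card) := by
  have hTc : Tᶜ.card = n - T.card := by simp [Finset.card_compl]
  rw [← hTc, ← Finset.card_powersetCard]
  apply Finset.card_bij' (fun A _ => A \ T) (fun B _ => B ∪ S)
  · intro A hA
    simp only [mem_filter, mem_powersetCard] at hA
    obtain ⟨⟨_, hAk⟩, hAT⟩ := hA
    rw [mem_powersetCard]
    constructor
    · intro x hx
      simp only [mem_sdiff] at hx
      simp [hx.2]
    · have := Finset.card_sdiff_add_card_inter A T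
      rw [hAT] at this
      omega
  · intro B hB
    rw [mem_powersetCard] at hB
    obtain ⟨hBsub, hBcard⟩ := hB
    have hBT : Disjoint B T := by
      rw [Finset.disjoint_left]
      intro x hx
      have := hBsub hx
      simpa using this
    simp only [mem_filter, mem_powersetCard]
    refine ⟨⟨subset_univ _, ?_⟩, ?_⟩
    · rw [Finset.card_union_of_disjoint (hBT.mono_right hST)]
      omega
    · rw [Finset.union_inter_distrib_right, Finset.inter_eq_left.mpr hST,
        Finset.disjoint_iff_inter_eq_empty.mp hBT, Finset.empty_union]
  · intro A hA
    simp only [mem_filter, mem_powersetCard] at hA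
    conv_rhs => rw [← Finset.sdiff_union_inter A T]
    rw [hA.2]
  · intro B hB
    rw [mem_powersetCard] at hB
    rw [Finset.union_sdiff_distrib, Finset.sdiff_eq_self_of_disjoint ?_,
      Finset.sdiff_eq_empty_iff_subset.mpr hST, Finset.union_empty]
    rw [Finset.disjoint_left]
    intro x hx
    have := hB.1 hx
    simpa using this

lemma sumFiber (n k : ℕ) (T : Finset (Fin n)) (f : Finset (Fin n) → ℝ) :
    ∑ A ∈ powersetCard k (univ : Finset (Fin n)), f (A ∩ T)
      = ∑ S ∈ T.powerset,
          (((powersetCard k (univ : Finset (Fin n))).filter (fun A => A ∩ T = S)).card : ℝ) * f S := by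
  rw [← Finset.sum_fiberwise_of_maps_to' (g := fun A => A ∩ T) (t := T.powerset)
    (fun A _ => by simp) f]
  refine Finset.sum_congr rfl fun S _ => ?_
  rw [Finset.sum_const, nsmul_eq_mul]


open scoped RealInnerProductSpace

lemma forward {H : Type*} [NormedAddCommGroup H] [NormedSpace ℝ H]
    (n k : ℕ) (hk : 2 ≤ k) (hkn : k < n)
    (hpar : ∀ x y : H, ‖x + y‖ ^ 2 + ‖x - y‖ ^ 2 = 2 * ‖x‖ ^ 2 + 2 * ‖y‖ ^ 2)
    (x : Fin n → H) :
    ((n - 2).choose (k - 2) : ℝ) * ‖∑ i, x i‖ ^ 2 =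
      (∑ A ∈ Finset.powersetCard k (Finset.univ : Finset (Fin n)),
        ‖∑ i ∈ A, x i‖ ^ 2) -
        ((n - 2).choose (k - 1) : ℝ) * ∑ i, ‖x i‖ ^ 2 := by
  letI : InnerProductSpace ℝ H := InnerProductSpace.ofNorm ℝ (fun a b => by
    have := hpar a b; nlinarith [this])
  set P := Finset.powersetCard k (Finset.univ : Finset (Fin n)) with hP
  set g : Fin n → Fin n → ℝ := fun i j => ⟪x i, x j⟫ with hg
  have hnorm : ∀ s : Finset (Fin n), ‖∑ i ∈ s, x i‖ ^ 2 = ∑ i ∈ s, ∑ j ∈ s, g i j := by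
    intro s
    rw [← real_inner_self_eq_norm_sq, sum_inner]
    exact Finset.sum_congr rfl fun i _ => inner_sum _ _ _
  have key : ∑ A ∈ P, ∑ i ∈ A, ∑ j ∈ A, g i j
      = ∑ i : Fin n, ∑ j : Fin n,
          ((P.filter (fun A => i ∈ A ∧ j ∈ A)).card : ℝ) * g i j := by
    have h1 : ∀ A ∈ P, ∑ i ∈ A, ∑ j ∈ A, g i j
        = ∑ i : Fin n, ∑ j : Fin n, if i ∈ A ∧ j ∈ A then g i j else 0 := by
      intro A _
      have : ∀ i : Fin n, ∑ j : Fin n, (if i ∈ A ∧ j ∈ A then g i j else 0)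
          = if i ∈ A then ∑ j ∈ A, g i j else 0 := by
        intro i
        by_cases hi : i ∈ A <;> simp [hi, Finset.sum_ite_mem]
      rw [Finset.sum_congr rfl (fun i _ => this i), Finset.sum_ite_mem, univ_inter]
    rw [Finset.sum_congr rfl h1, Finset.sum_comm]
    refine Finset.sum_congr rfl fun i _ => ?_
    rw [Finset.sum_comm]
    refine Finset.sum_congr rfl fun j _ => ?_
    rw [← Finset.sum_filter, Finset.sum_const, nsmul_eq_mul]
  have cdiag : ∀ i : Fin n, ((P.filter (fun A => i ∈ A ∧ i ∈ A)).card : ℝ)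
      = ((n-1).choose (k-1) : ℝ) := by
    intro i
    have h := filterCard n k {i} {i} (subset_refl _) (by simp; omega)
    rw [Finset.filter_congr (fun A _ => by
      simp [Finset.inter_eq_right] : ∀ A ∈ P, (i ∈ A ∧ i ∈ A) ↔ A ∩ {i} = {i})]
    simp only [Finset.card_singleton] at h
    rw [hP, h]
  have coff : ∀ i j : Fin n, i ≠ j → ((P.filter (fun A => i ∈ A ∧ j ∈ A)).card : ℝ)
      = ((n-2).choose (k-2) : ℝ) := by
    intro i j hij
    have hT : ({i, j} : Finset (Fin n)).card = 2 := by
      rw [Finset.card_insert_of_notMem (by simp [hij]), Finset.card_singleton]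
    have h := filterCard n k {i, j} {i, j} (subset_refl _) (by omega)
    rw [Finset.filter_congr (fun A _ => by
      simp [Finset.inter_eq_right, Finset.insert_subset_iff] :
      ∀ A ∈ P, (i ∈ A ∧ j ∈ A) ↔ A ∩ {i, j} = {i, j})]
    rw [hT] at h
    rw [hP, h]
  have pascal : ((n-1).choose (k-1) : ℝ)
      = ((n-2).choose (k-2) : ℝ) + ((n-2).choose (k-1) : ℝ) := by
    have h1 : n - 1 = (n-2) + 1 := by omega
    have h2 : k - 1 = (k-2) + 1 := by omega
    rw [h1, h2, Nat.choose_succ_succ]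
    push_cast; ring
  have hxi : ∀ i : Fin n, ‖x i‖ ^ 2 = g i i := fun i => (real_inner_self_eq_norm_sq _).symm
  rw [hnorm, Finset.sum_congr rfl (fun A (_ : A ∈ P) => hnorm A), key,
    Finset.sum_congr rfl (fun i (_ : i ∈ univ) => hxi i)]
  have perI : ∀ i : Fin n,
      ∑ j : Fin n, ((P.filter (fun A => i ∈ A ∧ j ∈ A)).card : ℝ) * g i j
        = ((n-2).choose (k-2) : ℝ) * ∑ j : Fin n, g i j
          + ((n-2).choose (k-1) : ℝ) * g i i := by
    intro i
    rw [← Finset.add_sum_erase _ _ (Finset.mem_univ i),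
      ← Finset.add_sum_erase _ (fun j => g i j) (Finset.mem_univ i)]
    rw [Finset.sum_congr rfl (fun j hj => by
      rw [coff i j (Ne.symm (Finset.ne_of_mem_erase hj))]),
      cdiag i, pascal]
    rw [mul_add, Finset.mul_sum]
    ring
  rw [Finset.sum_congr rfl (fun i (_ : i ∈ univ) => perI i)]
  rw [Finset.sum_add_distrib, ← Finset.mul_sum, ← Finset.mul_sum]
  ring


lemma backward {H : Type*} [NormedAddCommGroup H] [NormedSpace ℝ H]
    (n k : ℕ) (hk : 2 ≤ k) (hkn : k < n)
    (h : ∀ x : Fin n → H,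
        ((n - 2).choose (k - 2) : ℝ) * ‖∑ i, x i‖ ^ 2 =
          (∑ A ∈ Finset.powersetCard k (Finset.univ : Finset (Fin n)),
            ‖∑ i ∈ A, x i‖ ^ 2) -
            ((n - 2).choose (k - 1) : ℝ) * ∑ i, ‖x i‖ ^ 2)
    (u v : H) : ‖u + v‖ ^ 2 + ‖u - v‖ ^ 2 = 2 * ‖u‖ ^ 2 + 2 * ‖v‖ ^ 2 := by
  have hn3 : 3 ≤ n := by omega
  set a : Fin n := ⟨0, by omega⟩ with ha
  set b : Fin n := ⟨1, by omega⟩ with hb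
  set c : Fin n := ⟨2, by omega⟩ with hc
  have hab : a ≠ b := by simp [ha, hb, Fin.ext_iff]
  have hac : a ≠ c := by simp [ha, hc, Fin.ext_iff]
  have hbc : b ≠ c := by simp [hb, hc, Fin.ext_iff]
  set T : Finset (Fin n) := insert a (insert b {c}) with hT
  have haT : a ∉ insert b ({c} : Finset (Fin n)) := by simp [hab, hac]
  have hbT : b ∉ ({c} : Finset (Fin n)) := by simp [hbc]
  have hTcard : T.card = 3 := by
    rw [hT, Finset.card_insert_of_notMem haT, Finset.card_insert_of_notMem hbT,
      Finset.card_singleton]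
  set x : Fin n → H := fun i => if i = a then u else if i = b then v else
    if i = c then -v else 0 with hx
  have hx0 : ∀ i, i ∉ T → x i = 0 := by
    intro i hi
    simp only [hT, Finset.mem_insert, Finset.mem_singleton, not_or] at hi
    simp [hx, hi.1, hi.2.1, hi.2.2]
  have hxa : x a = u := by simp [hx]
  have hxb : x b = v := by simp [hx, hab.symm]
  have hxc : x c = -v := by simp [hx, hac.symm, hbc.symm]
  have hsumT : ∑ i ∈ T, x i = u := by
    rw [hT, Finset.sum_insert haT, Finset.sum_insert hbT, Finset.sum_singleton,
      hxa, hxb, hxc]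
    abel
  have h1 : ∑ i, x i = u := by
    rw [← Finset.sum_subset (Finset.subset_univ T) (fun i _ hi => hx0 i hi), hsumT]
  have h2 : ∑ i, ‖x i‖ ^ 2 = ‖u‖ ^ 2 + 2 * ‖v‖ ^ 2 := by
    rw [← Finset.sum_subset (Finset.subset_univ T)
      (fun i _ hi => by rw [hx0 i hi, norm_zero]; ring)]
    rw [hT, Finset.sum_insert haT, Finset.sum_insert hbT, Finset.sum_singleton,
      hxa, hxb, hxc, norm_neg]
    ring
  have h3 : ∀ A : Finset (Fin n), ‖∑ i ∈ A, x i‖ ^ 2 = ‖∑ i ∈ A ∩ T, x i‖ ^ 2 := by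
    intro A
    rw [Finset.sum_subset (Finset.inter_subset_left)
      (fun i hiA hi => hx0 i (fun hT' => hi (Finset.mem_inter.mpr ⟨hiA, hT'⟩)))]
  have hh := h x
  rw [h1, h2, Finset.sum_congr rfl (fun A _ => h3 A),
    sumFiber n k T (fun S => ‖∑ i ∈ S, x i‖ ^ 2)] at hh
  -- expand the powerset sum
  rw [hT] at hh
  rw [Finset.sum_powerset_insert haT] at hh
  simp only [Finset.sum_powerset_insert hbT] at hh
  rw [show ({c} : Finset (Fin n)) = insert c ∅ from rfl] at hh
  simp only [Finset.sum_powerset_insert (Finset.notMem_empty c),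
    Finset.powerset_empty, Finset.sum_singleton] at hh
  -- counts
  have hcnt : ∀ S : Finset (Fin n), S ⊆ T → S.card ≤ k →
      (((powersetCard k (univ : Finset (Fin n))).filter (fun A => A ∩ T = S)).card : ℕ)
        = (n - 3).choose (k - S.card) := by
    intro S hS hSk
    rw [filterCard n k T S hS hSk, hTcard]
  simp only [insert_empty_eq] at hh
  rw [← hT] at hh
  simp only [Finset.sum_insert, Finset.mem_insert, Finset.mem_singleton,
    Finset.notMem_empty, or_false, not_or, hab, hac, hbc, ne_eq, not_false_iff,
    Finset.sum_singleton, Finset.sum_empty, hxa, hxb, hxc, ← sub_eq_add_neg,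
    sub_self, add_zero, norm_zero, norm_neg, and_true, and_self] at hh
  rw [hsumT] at hh
  set P := Finset.powersetCard k (Finset.univ : Finset (Fin n)) with hPdef
  have hcard_ac : ({a, c} : Finset (Fin n)).card = 2 := by
    rw [Finset.card_insert_of_notMem (by simp [hac])]; rfl
  have hcard_ab : ({a, b} : Finset (Fin n)).card = 2 := by
    rw [Finset.card_insert_of_notMem (by simp [hab])]; rfl
  have hqa : (P.filter (fun A => A ∩ T = ({a} : Finset (Fin n)))).card
      = (n - 3).choose (k - 1) := by
    have := hcnt {a} (by simp [hT]) (by simp; omega)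
    simpa using this
  have hqb : (P.filter (fun A => A ∩ T = ({b} : Finset (Fin n)))).card
      = (n - 3).choose (k - 1) := by
    have := hcnt {b} (by simp [hT]) (by simp; omega)
    simpa using this
  have hqc : (P.filter (fun A => A ∩ T = ({c} : Finset (Fin n)))).card
      = (n - 3).choose (k - 1) := by
    have := hcnt {c} (by simp [hT]) (by simp; omega)
    simpa using this
  have hqac : (P.filter (fun A => A ∩ T = ({a, c} : Finset (Fin n)))).card
      = (n - 3).choose (k - 2) := by
    have := hcnt {a, c} (by simp [hT, Finset.insert_subset_iff]) (by rw [hcard_ac]; omega)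
    rw [hcard_ac] at this
    exact this
  have hqab : (P.filter (fun A => A ∩ T = ({a, b} : Finset (Fin n)))).card
      = (n - 3).choose (k - 2) := by
    have := hcnt {a, b} (by simp [hT, Finset.insert_subset_iff]) (by rw [hcard_ab]; omega)
    rw [hcard_ab] at this
    exact this
  have hNT : (n - 2).choose (k - 2)
      = (P.filter (fun A => A ∩ T = T)).card + (n - 3).choose (k - 2) := by
    rcases Nat.lt_or_ge k 3 with h3 | h3
    · have hk2 : k = 2 := by omega
      have hzero : (P.filter (fun A => A ∩ T = T)) = ∅ := by
        rw [Finset.filter_eq_empty_iff]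
        intro A hA hAT
        rw [hPdef, Finset.mem_powersetCard] at hA
        have hTA : T ⊆ A := Finset.inter_eq_right.mp hAT
        have := Finset.card_le_card hTA
        rw [hTcard, hA.2] at this
        omega
      rw [hzero, hk2]
      simp
    · have := hcnt T (subset_refl _) (by omega)
      rw [hTcard] at this
      rw [this]
      have e1 : n - 2 = (n - 3) + 1 := by omega
      have e2 : k - 2 = (k - 3) + 1 := by omega
      rw [e1, e2, Nat.choose_succ_succ]
  have hp2 : (n - 2).choose (k - 1) = (n - 3).choose (k - 2) + (n - 3).choose (k - 1) := by
    have e1 : n - 2 = (n - 3) + 1 := by omega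
    have e2 : k - 1 = (k - 2) + 1 := by omega
    rw [e1, e2, Nat.choose_succ_succ]
  rw [hqa, hqb, hqc, hqac, hqab] at hh
  have hNTc : ((n - 2).choose (k - 2) : ℝ)
      = ((P.filter (fun A => A ∩ T = T)).card : ℝ) + ((n - 3).choose (k - 2) : ℝ) := by
    exact_mod_cast hNT
  have hp2c : ((n - 2).choose (k - 1) : ℝ)
      = ((n - 3).choose (k - 2) : ℝ) + ((n - 3).choose (k - 1) : ℝ) := by
    exact_mod_cast hp2
  have hpos : (0 : ℝ) < ((n - 3).choose (k - 2) : ℝ) := by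
    exact_mod_cast Nat.choose_pos (by omega : k - 2 ≤ n - 3)
  rw [hNTc, hp2c] at hh
  have key : ((n - 3).choose (k - 2) : ℝ) * (‖u + v‖ ^ 2 + ‖u - v‖ ^ 2)
      = ((n - 3).choose (k - 2) : ℝ) * (2 * ‖u‖ ^ 2 + 2 * ‖v‖ ^ 2) := by
    ring_nf at hh ⊢
    linarith
  exact mul_left_cancel₀ (ne_of_gt hpos) key


theorem stmt12 {H : Type*} [NormedAddCommGroup H] [NormedSpace ℝ H]
    (hdim : 2 ≤ Module.rank ℝ H) (n k : ℕ) (hk : 2 ≤ k) (hkn : k < n) :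
    (∀ x y : H, ‖x + y‖ ^ 2 + ‖x - y‖ ^ 2 = 2 * ‖x‖ ^ 2 + 2 * ‖y‖ ^ 2) ↔
      ∀ x : Fin n → H,
        ((n - 2).choose (k - 2) : ℝ) * ‖∑ i, x i‖ ^ 2 =
          (∑ A ∈ Finset.powersetCard k (Finset.univ : Finset (Fin n)),
            ‖∑ i ∈ A, x i‖ ^ 2) -
            ((n - 2).choose (k - 1) : ℝ) * ∑ i, ‖x i‖ ^ 2 :=
  ⟨fun hp x => forward n k hk hkn hp x, fun h u v => backward n k hk hkn h u v⟩
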